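/- Let μ, ν be finite nonempty sets, and consider functions f_a : μ → Fin 2, f_b : Fin 2 × ν → Fin 2, f_c : Fin 2 × ν → Fin 2 (the instrumental scenario: a ← μ, b ← (a, ν), c ← (b, ν)). Define the observed triple for (λ, κ) ∈ μ × ν as (a, b, c) where a = f_a(λ), b = f_b(a, κ), c = f_c(b, κ). Then the set of observed triples over all (λ, κ) ∈ μ × ν cannot equal {(0,0,0), (1,0,1)}. -/
import Mathlib

/-- The support `{(0,0,0),(1,0,1)}` is possibilistically
incompatible with the instrumental causal structure. -/
theorem instrumental_incompatible
    {μ ν : Type*} [Fintype μ] [Fintype ν] [Nonempty μ] [Nonempty ν]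
    (f_a : μ → Fin 2) (f_b : Fin 2 × ν → Fin 2) (f_c : Fin 2 × ν → Fin 2) :
    Set.range (fun p : μ × ν =>
        (f_a p.1, f_b (f_a p.1, p.2), f_c (f_b (f_a p.1, p.2), p.2)))
      ≠ ({((0 : Fin 2), (0 : Fin 2), (0 : Fin 2)), (1, 0, 1)} :
          Set (Fin 2 × Fin 2 × Fin 2)) := by
  intro h
  have h0 : ((0:Fin 2), (0:Fin 2), (0:Fin 2)) ∈ Set.range (fun p : μ × ν =>
      (f_a p.1, f_b (f_a p.1, p.2), f_c (f_b (f_a p.1, p.2), p.2))) := by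
    rw [h]; left; rfl
  have h1 : ((1:Fin 2), (0:Fin 2), (1:Fin 2)) ∈ Set.range (fun p : μ × ν =>
      (f_a p.1, f_b (f_a p.1, p.2), f_c (f_b (f_a p.1, p.2), p.2))) := by
    rw [h]; right; rfl
  obtain ⟨⟨l0, k0⟩, e0⟩ := h0
  obtain ⟨⟨l1, k1⟩, e1⟩ := h1
  simp only [Prod.mk.injEq] at e0 e1
  obtain ⟨a0, b0, c0⟩ := e0
  obtain ⟨a1, b1, c1⟩ := e1
  -- mixed point (l0, k1)
  have hm : (f_a l0, f_b (f_a l0, k1), f_c (f_b (f_a l0, k1), k1)) ∈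
      ({((0 : Fin 2), (0 : Fin 2), (0 : Fin 2)), (1, 0, 1)} :
          Set (Fin 2 × Fin 2 × Fin 2)) := by
    rw [← h]; exact ⟨(l0, k1), rfl⟩
  rw [a0] at hm
  rcases hm with hm | hm
  · simp only [Prod.mk.injEq] at hm
    obtain ⟨-, hb, hc⟩ := hm
    rw [hb] at hc
    rw [b1] at c1
    rw [c1] at hc
    exact absurd hc (by decide)
  · have : (0:Fin 2) = 1 := congrArg Prod.fst hm
    exact absurd this (by decide)
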